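/- Let ψ = ⊕_a Tr(ρ_a ·) be a δ-form on B = ⊕_{a=1}^d M_{n_a} and let T ∈ B satisfy Tr(ρ_a^{-1} T_a* T_a) = δ² for each block component T_a of T. Then A(x) := T x T* is a quantum adjacency operator (i.e. *-preserving with m(A⊗A)m* = δ² A), and the associated matrix D_{ab} = ⟨ρ_b^{-1}, A(ρ_a^{-1})⟩_ψ equals δ² times the identity matrix: D_{ab} = δ² δ_{ab}. -/

import Mathlib

open scoped TensorProduct ComplexOrder
open Matrix

/-- The multimatrix algebra `B = ⊕_{a=1}^d M_{n_a}` over `ℂ`. -/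
abbrev MB (d : ℕ) (n : Fin d → ℕ) := ∀ a : Fin d, Matrix (Fin (n a)) (Fin (n a)) ℂ

/-- The state `ψ = ⊕_a Tr(ρ_a ·)` as a linear functional. -/
noncomputable def psiL {d : ℕ} {n : Fin d → ℕ} (ρ : MB d n) : MB d n →ₗ[ℂ] ℂ where
  toFun X := ∑ a, (ρ a * X a).trace
  map_add' x y := by simp [mul_add, Finset.sum_add_distrib]
  map_smul' c x := by simp [Finset.mul_sum, mul_smul_comm]

/-- The GNS inner product on `B ⊗ B` paired against the pure tensor `x ⊗ y` in the first
(conjugated) slot. -/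
noncomputable def pairL {d : ℕ} {n : Fin d → ℕ} (ρ : MB d n) (x y : MB d n) :
    (MB d n ⊗[ℂ] MB d n) →ₗ[ℂ] ℂ :=
  TensorProduct.lift
    (LinearMap.mk₂ ℂ (fun c e => psiL ρ (star x * c) * psiL ρ (star y * e))
      (fun c c' e => by simp [mul_add, map_add, add_mul])
      (fun s c e => by simp [mul_smul_comm, _root_.map_smul, smul_eq_mul]; ring)
      (fun c e e' => by simp [mul_add, map_add])
      (fun s c e => by simp [mul_smul_comm, _root_.map_smul, smul_eq_mul]; ring))

/-- The rank-one quantum adjacency operator `A(x) = T x T*`. -/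
noncomputable def rankOneA {d : ℕ} {n : Fin d → ℕ} (T : MB d n) :
    MB d n →ₗ[ℂ] MB d n where
  toFun x := T * x * star T
  map_add' x y := by simp [mul_add, add_mul]
  map_smul' c x := by simp [mul_smul_comm, smul_mul_assoc]

namespace Stmt8
variable {d : ℕ} {n : Fin d → ℕ}

/-- basis element -/
noncomputable def E (a : Fin d) (i j : Fin (n a)) : MB d n :=
  Pi.single a (Matrix.single i j 1)

lemma single_mul (a : Fin d) (M : Matrix (Fin (n a)) (Fin (n a)) ℂ) (X : MB d n) :
    (Pi.single a M : MB d n) * X = Pi.single a (M * X a) := by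
  funext b
  rcases eq_or_ne b a with rfl | hb
  · simp [Pi.mul_apply]
  · simp [Pi.mul_apply, Pi.single_eq_of_ne hb]

lemma mul_single (a : Fin d) (M : Matrix (Fin (n a)) (Fin (n a)) ℂ) (X : MB d n) :
    X * (Pi.single a M : MB d n) = Pi.single a (X a * M) := by
  funext b
  rcases eq_or_ne b a with rfl | hb
  · simp [Pi.mul_apply]
  · simp [Pi.mul_apply, Pi.single_eq_of_ne hb]

lemma star_single (a : Fin d) (M : Matrix (Fin (n a)) (Fin (n a)) ℂ) :
    star (Pi.single a M : MB d n) = Pi.single a Mᴴ := by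
  funext b
  rcases eq_or_ne b a with rfl | hb
  · simp [Pi.star_apply, Matrix.star_eq_conjTranspose]
  · simp [Pi.star_apply, Pi.single_eq_of_ne hb]

lemma psi_single (ρ : MB d n) (a : Fin d) (M : Matrix (Fin (n a)) (Fin (n a)) ℂ) :
    psiL ρ (Pi.single a M) = (ρ a * M).trace := by
  show (∑ b, (ρ b * (Pi.single a M : MB d n) b).trace) = _
  rw [Finset.sum_eq_single a]
  · simp
  · intro b _ hb; simp [Pi.single_eq_of_ne hb]
  · simp

lemma psi_mul_E (c : ∀ a, Fin (n a) → ℝ) (ρ : MB d n)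
    (hρ : ∀ a, ρ a = Matrix.diagonal (fun k => (c a k : ℂ)))
    (a : Fin d) (j k : Fin (n a)) (W : MB d n) :
    psiL ρ (W * E a j k) = (c a k : ℂ) * W a k j := by
  rw [E, mul_single, psi_single, hρ]
  simp [Matrix.trace, Matrix.diag, Matrix.mul_apply, Matrix.single,
    Matrix.diagonal, ite_and, mul_comm]

noncomputable def bB (d : ℕ) (n : Fin d → ℕ) :
    Module.Basis ((a : Fin d) × (Fin (n a) × Fin (n a))) ℂ (MB d n) :=
  Pi.basis fun a => Matrix.stdBasis ℂ (Fin (n a)) (Fin (n a))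

lemma bB_apply (μ : (a : Fin d) × (Fin (n a) × Fin (n a))) :
    bB d n μ = E μ.1 μ.2.1 μ.2.2 := by
  obtain ⟨a, i, j⟩ := μ
  simp [bB, E, Matrix.stdBasis_eq_single]

lemma pairL_tmul (ρ : MB d n) (x y u v : MB d n) :
    pairL ρ x y (u ⊗ₜ[ℂ] v) = psiL ρ (star x * u) * psiL ρ (star y * v) := rfl

end Stmt8
namespace Stmt8
variable {d : ℕ} {n : Fin d → ℕ}

lemma E_star (a : Fin d) (i j : Fin (n a)) : star (E a i j) = E a j i := by
  rw [E, star_single, E]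
  have : (Matrix.single i j (1:ℂ))ᴴ = Matrix.single j i 1 := by
    ext p q
    simp [Matrix.single, Matrix.conjTranspose_apply, and_comm]
  rw [this]

lemma nondeg (c : ∀ a, Fin (n a) → ℝ) (hc : ∀ a k, 0 < c a k) (ρ : MB d n)
    (hρ : ∀ a, ρ a = Matrix.diagonal (fun k => (c a k : ℂ)))
    (w : MB d n ⊗[ℂ] MB d n)
    (h : ∀ x y, pairL ρ x y w = 0) : w = 0 := by
  rw [← ((bB d n).tensorProduct (bB d n)).forall_coord_eq_zero_iff]
  rintro ⟨⟨a, i, j⟩, ⟨b, k, l⟩⟩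
  have key : pairL ρ (E a i j) (E b k l)
      = (((c a j : ℂ)) * ((c b l : ℂ))) •
        ((bB d n).tensorProduct (bB d n)).coord ⟨⟨a,i,j⟩,⟨b,k,l⟩⟩ := by
    apply Module.Basis.ext ((bB d n).tensorProduct (bB d n))
    rintro ⟨⟨a', i', j'⟩, ⟨b', k', l'⟩⟩
    rw [LinearMap.smul_apply, Module.Basis.coord_apply, Module.Basis.repr_self, Finsupp.single_apply,
      Module.Basis.tensorProduct_apply', bB_apply, bB_apply]
    simp only []
    rw [pairL_tmul, E_star, E_star, psi_mul_E c ρ hρ, psi_mul_E c ρ hρ, smul_eq_mul]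
    rcases eq_or_ne a a' with rfl | ha
    · rcases eq_or_ne b b' with rfl | hb
      · simp only [E, Pi.single_eq_same, Matrix.single, Matrix.of_apply,
          Sigma.mk.inj_iff, heq_eq_eq, Prod.mk.injEq, Prod.ext_iff, true_and]
        by_cases h1 : i = i' <;> by_cases h2 : j = j' <;>
          by_cases h3 : k = k' <;> by_cases h4 : l = l' <;>
          simp [h1, h2, h3, h4, eq_comm]
      · have hE : (E b l k : MB d n) b' = 0 := Pi.single_eq_of_ne (Ne.symm hb) _
        simp [hE, Prod.ext_iff, Sigma.mk.inj_iff, Ne.symm hb]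
    · have hE : (E a j i : MB d n) a' = 0 := Pi.single_eq_of_ne (Ne.symm ha) _
      simp [hE, Prod.ext_iff, Sigma.mk.inj_iff, Ne.symm ha]
  have h0 := h (E a i j) (E b k l)
  rw [key] at h0
  simp only [LinearMap.smul_apply, smul_eq_mul, mul_eq_zero] at h0
  rcases h0 with (h0 | h0) | h0
  · exact absurd h0 (by simp [Complex.ofReal_ne_zero, (hc a j).ne'])
  · exact absurd h0 (by simp [Complex.ofReal_ne_zero, (hc b l).ne'])
  · simpa using h0

end Stmt8
namespace Stmt8
variable {d : ℕ} {n : Fin d → ℕ}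

noncomputable def mstarExp (c : ∀ a, Fin (n a) → ℝ) (z : MB d n) :
    MB d n ⊗[ℂ] MB d n :=
  ∑ a : Fin d, ∑ j : Fin (n a), ∑ k : Fin (n a),
    ((c a j : ℂ))⁻¹ • ((z * E a k j) ⊗ₜ[ℂ] E a j k)

lemma pairL_mstarExp (c : ∀ a, Fin (n a) → ℝ) (hc : ∀ a k, 0 < c a k) (ρ : MB d n)
    (hρ : ∀ a, ρ a = Matrix.diagonal (fun k => (c a k : ℂ)))
    (x y z : MB d n) :
    pairL ρ x y (mstarExp c z) = psiL ρ (star (x * y) * z) := by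
  rw [mstarExp]
  simp only [map_sum, _root_.map_smul, pairL_tmul, smul_eq_mul]
  have hterm : ∀ (a : Fin d) (j k : Fin (n a)),
      ((c a j : ℂ))⁻¹ * (psiL ρ (star x * (z * E a k j)) * psiL ρ (star y * E a j k))
      = (star x * z) a j k * ((c a k : ℂ) * star (y a j k)) := by
    intro a j k
    rw [← mul_assoc (star x) z, psi_mul_E c ρ hρ, psi_mul_E c ρ hρ]
    have : (star y : MB d n) a k j = star (y a j k) := by
      simp [Pi.star_apply, Matrix.star_eq_conjTranspose, Matrix.conjTranspose_apply]
    rw [this]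
    field_simp [Complex.ofReal_ne_zero, (hc a j).ne']
  rw [Finset.sum_congr rfl fun a _ => Finset.sum_congr rfl fun j _ =>
    Finset.sum_congr rfl fun k _ => hterm a j k]
  -- now RHS
  show _ = ∑ a, (ρ a * ((star (x * y)) a * z a)).trace
  rw [Finset.sum_congr rfl]
  intro a _
  rw [hρ]
  simp only [Pi.star_apply, Pi.mul_apply, Matrix.star_eq_conjTranspose,
    Matrix.conjTranspose_mul]
  rw [Matrix.trace]
  simp only [Matrix.diag_apply, Matrix.mul_apply, Matrix.diagonal_apply,
    Matrix.conjTranspose_apply]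
  simp only [Finset.sum_ite_eq, Finset.mem_univ, if_true, ite_mul, zero_mul,
    Finset.sum_ite_eq']
  simp only [Finset.sum_mul, Finset.mul_sum]
  rw [Finset.sum_comm]
  refine Finset.sum_congr rfl fun k _ => ?_
  rw [Finset.sum_comm]
  refine Finset.sum_congr rfl fun m _ => ?_
  refine Finset.sum_congr rfl fun j _ => ?_
  ring

end Stmt8
namespace Stmt8
variable {d : ℕ} {n : Fin d → ℕ}

lemma sandwich {m : ℕ} (M : Matrix (Fin m) (Fin m) ℂ) (j k : Fin m) :
    Matrix.single k j (1:ℂ) * M * Matrix.single j k 1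
      = M j j • Matrix.single k k 1 := by
  ext p q
  simp only [Matrix.mul_apply, Matrix.single, Matrix.of_apply, Matrix.smul_apply,
    ite_and, smul_eq_mul]
  by_cases h1 : k = p <;> by_cases h2 : k = q <;> simp [h1, h2, mul_comm]

lemma sum_diag_one {m : ℕ} : ∑ k : Fin m, Matrix.single k k (1:ℂ) = 1 := by
  ext p q
  simp [Matrix.sum_apply, Matrix.single, Matrix.one_apply, ite_and,
    Finset.sum_ite_eq, eq_comm]

lemma sum_single_one : (∑ a : Fin d, (Pi.single a 1 : MB d n)) = 1 := by
  simpa using Finset.univ_sum_single (1 : MB d n)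

lemma rho_inv (c : ∀ a, Fin (n a) → ℝ) (hc : ∀ a k, 0 < c a k) (ρ : MB d n)
    (hρ : ∀ a, ρ a = Matrix.diagonal (fun k => (c a k : ℂ))) (a : Fin d) :
    (ρ a)⁻¹ = Matrix.diagonal (fun k => ((c a k : ℂ))⁻¹) := by
  apply Matrix.inv_eq_right_inv
  rw [hρ, Matrix.diagonal_mul_diagonal]
  have : (fun k => (c a k : ℂ) * ((c a k : ℂ))⁻¹) = fun _ => 1 := by
    funext k
    exact mul_inv_cancel₀ (by simp [Complex.ofReal_ne_zero, (hc a k).ne'])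
  rw [this, Matrix.diagonal_one]

lemma key_sum (c : ∀ a, Fin (n a) → ℝ) (hc : ∀ a k, 0 < c a k) (ρ : MB d n)
    (hρ : ∀ a, ρ a = Matrix.diagonal (fun k => (c a k : ℂ)))
    (δ : ℝ) (T : MB d n)
    (hT : ∀ a, ((ρ a)⁻¹ * (T a)ᴴ * T a).trace = (δ ^ 2 : ℂ)) :
    (∑ a : Fin d, ∑ j : Fin (n a), ∑ k : Fin (n a),
      ((c a j : ℂ))⁻¹ • (E a k j * (star T * T) * E a j k)) = (δ^2:ℂ) • (1 : MB d n) := by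
  have h1 : ∀ (a : Fin d) (j k : Fin (n a)), E a k j * (star T * T) * E a j k
      = ((star T * T) a j j) • (Pi.single a (Matrix.single k k 1) : MB d n) := by
    intro a j k
    rw [E, E, single_mul, mul_single, Pi.single_eq_same, sandwich, Pi.single_smul]
  have h2 : ∀ a : Fin d, ∑ j, ((c a j:ℂ))⁻¹ * ((star T * T) a j j) = (δ^2 : ℂ) := by
    intro a
    rw [← hT a, rho_inv c hc ρ hρ, Matrix.mul_assoc]
    rw [Matrix.trace]
    simp only [Matrix.diag_apply, Matrix.mul_apply, Matrix.diagonal_apply, ite_mul,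
      zero_mul, Finset.sum_ite_eq, Finset.mem_univ, if_true]
    refine Finset.sum_congr rfl fun j _ => ?_
    simp [Pi.mul_apply, Pi.star_apply, Matrix.star_eq_conjTranspose, Matrix.mul_apply]
  calc (∑ a : Fin d, ∑ j : Fin (n a), ∑ k : Fin (n a),
      ((c a j : ℂ))⁻¹ • (E a k j * (star T * T) * E a j k))
      = ∑ a : Fin d, ∑ j : Fin (n a), (((c a j : ℂ))⁻¹ * ((star T * T) a j j)) •
          (Pi.single a (∑ k : Fin (n a), Matrix.single k k 1) : MB d n) := by
        refine Finset.sum_congr rfl fun a _ => Finset.sum_congr rfl fun j _ => ?_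
        have hs : (Pi.single a (∑ k : Fin (n a), Matrix.single k k (1:ℂ)) : MB d n)
            = ∑ k : Fin (n a), (Pi.single a (Matrix.single k k 1) : MB d n) :=
          map_sum (LinearMap.single ℂ (fun b => Matrix (Fin (n b)) (Fin (n b)) ℂ) a) _ _
        rw [hs, Finset.smul_sum]
        refine Finset.sum_congr rfl fun k _ => ?_
        rw [h1, smul_smul]
    _ = ∑ a : Fin d, (δ^2:ℂ) • (Pi.single a 1 : MB d n) := by
        refine Finset.sum_congr rfl fun a _ => ?_
        rw [sum_diag_one, ← Finset.sum_smul, h2]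
    _ = (δ^2:ℂ) • (1 : MB d n) := by rw [← Finset.smul_sum, sum_single_one]
end Stmt8
namespace Stmt8
variable {d : ℕ} {n : Fin d → ℕ}

lemma rankOneA_apply (T x : MB d n) : rankOneA T x = T * x * star T := rfl

lemma rho_mul_inv (c : ∀ a, Fin (n a) → ℝ) (hc : ∀ a k, 0 < c a k) (ρ : MB d n)
    (hρ : ∀ a, ρ a = Matrix.diagonal (fun k => (c a k : ℂ))) (a : Fin d) :
    ρ a * (ρ a)⁻¹ = 1 := by
  rw [rho_inv c hc ρ hρ, hρ, Matrix.diagonal_mul_diagonal]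
  have : (fun k => (c a k : ℂ) * ((c a k : ℂ))⁻¹) = fun _ => 1 := by
    funext k
    exact mul_inv_cancel₀ (by simp [Complex.ofReal_ne_zero, (hc a k).ne'])
  rw [this, Matrix.diagonal_one]

lemma rho_inv_H (c : ∀ a, Fin (n a) → ℝ) (hc : ∀ a k, 0 < c a k) (ρ : MB d n)
    (hρ : ∀ a, ρ a = Matrix.diagonal (fun k => (c a k : ℂ))) (a : Fin d) :
    ((ρ a)⁻¹)ᴴ = (ρ a)⁻¹ := by
  rw [rho_inv c hc ρ hρ, Matrix.diagonal_conjTranspose]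
  have : (star fun k => ((c a k : ℂ))⁻¹) = fun k => ((c a k : ℂ))⁻¹ := by
    funext k
    simp [Pi.star_apply, Complex.star_def, map_inv₀, Complex.conj_ofReal]
  rw [this]

end Stmt8


open Stmt8 in
/-- let `ψ = ⊕_a Tr(ρ_a ·)` be a `δ`-form on `B = ⊕_a M_{n_a}`, and let
`T ∈ B` satisfy `Tr(ρ_a⁻¹ T_a* T_a) = δ²` for each block.  Then `A(x) = T x T*` is a
quantum adjacency operator (*-preserving with `m(A⊗A)m* = δ² A`), and the matrix
`D_{ab} = ⟨ρ_b⁻¹, A(ρ_a⁻¹)⟩_ψ` equals `δ²` times the identity: `D_{ab} = δ² δ_{ab}`. -/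
theorem stmt8 {d : ℕ} {n : Fin d → ℕ}
    (c : ∀ a, Fin (n a) → ℝ) (hc : ∀ a k, 0 < c a k)
    (ρ : MB d n) (hρ : ∀ a, ρ a = Matrix.diagonal (fun k => (c a k : ℂ)))
    (δ : ℝ) (hδ : 0 < δ)
    (mstar : MB d n →ₗ[ℂ] MB d n ⊗[ℂ] MB d n)
    (hmstar : ∀ x y z : MB d n,
      psiL ρ (star (x * y) * z) = pairL ρ x y (mstar z))
    (hform : ∀ z : MB d n, LinearMap.mul' ℂ (MB d n) (mstar z) = (δ ^ 2 : ℂ) • z)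
    (T : MB d n)
    (hT : ∀ a, ((ρ a)⁻¹ * (T a)ᴴ * T a).trace = (δ ^ 2 : ℂ)) :
    (∀ x, rankOneA T (star x) = star (rankOneA T x)) ∧
    (∀ z : MB d n,
      LinearMap.mul' ℂ (MB d n)
          (TensorProduct.map (rankOneA T) (rankOneA T) (mstar z)) =
        (δ ^ 2 : ℂ) • rankOneA T z) ∧
    (∀ a b : Fin d,
      psiL ρ (star (Pi.single b ((ρ b)⁻¹)) * rankOneA T (Pi.single a ((ρ a)⁻¹))) =
        if a = b then (δ ^ 2 : ℂ) else 0) := by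
  refine ⟨?_, ?_, ?_⟩
  · intro x
    simp only [rankOneA_apply, StarMul.star_mul, star_star, mul_assoc]
  · intro z
    have hme : mstar z = mstarExp c z := by
      have h0 : ∀ x y, pairL ρ x y (mstar z - mstarExp c z) = 0 := by
        intro x y
        rw [map_sub, ← hmstar x y z, pairL_mstarExp c hc ρ hρ, sub_self]
      exact sub_eq_zero.mp (nondeg c hc ρ hρ _ h0)
    rw [hme, mstarExp]
    simp only [map_sum, _root_.map_smul, TensorProduct.map_tmul, LinearMap.mul'_apply]
    have step : ∀ (a : Fin d) (j k : Fin (n a)),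
        ((c a j : ℂ))⁻¹ • (rankOneA T (z * E a k j) * rankOneA T (E a j k))
          = T * z * (((c a j : ℂ))⁻¹ • (E a k j * (star T * T) * E a j k)) * star T := by
      intro a j k
      rw [mul_smul_comm, smul_mul_assoc]
      congr 1
      simp only [rankOneA_apply, mul_assoc]
    calc (∑ a : Fin d, ∑ j : Fin (n a), ∑ k : Fin (n a),
          ((c a j : ℂ))⁻¹ • (rankOneA T (z * E a k j) * rankOneA T (E a j k)))
        = T * z * (∑ a : Fin d, ∑ j : Fin (n a), ∑ k : Fin (n a),
            ((c a j : ℂ))⁻¹ • (E a k j * (star T * T) * E a j k)) * star T := by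
          simp only [Finset.mul_sum, Finset.sum_mul]
          exact Finset.sum_congr rfl fun a _ => Finset.sum_congr rfl fun j _ =>
            Finset.sum_congr rfl fun k _ => step a j k
      _ = (δ ^ 2 : ℂ) • rankOneA T z := by
          rw [key_sum c hc ρ hρ δ T hT]
          rw [mul_smul_comm, smul_mul_assoc, mul_one, rankOneA_apply]
  · intro a b
    rw [rankOneA_apply, mul_single, single_mul, star_single, single_mul]
    rcases eq_or_ne a b with rfl | hab
    · rw [if_pos rfl, Pi.single_eq_same, psi_single, rho_inv_H c hc ρ hρ,
        ← Matrix.mul_assoc, rho_mul_inv c hc ρ hρ, Matrix.one_mul]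
      have hstar : (star T : MB d n) a = (T a)ᴴ := rfl
      rw [hstar, Matrix.trace_mul_cycle, Matrix.trace_mul_cycle, hT]
    · rw [if_neg hab]
      have h0 : (Pi.single a (T a * (ρ a)⁻¹ * (star T : MB d n) a) : MB d n) b = 0 :=
        Pi.single_eq_of_ne (Ne.symm hab) _
      rw [h0, Matrix.mul_zero, Pi.single_zero, map_zero]
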